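/- The period-0 equilibrium residual is strictly increasing in inflation at the steady state point: if θ > 0, φ > 0, r* > −1, b̄ ≥ 0, Dh(b̄, r*) > 0 and Dl(b̄, r*) > 0, then the function π ↦ G(b̄, π) has derivative at π = 1 equal to β·ρ·θ·w·zh/Dh(b̄,r*)² + β·(1−ρ)·θ·w·zl/Dl(b̄,r*)² + ε·φ/(ε−1)², and this derivative is strictly positive. (The sign of ∂F^π/∂π₀ in the proof of Proposition 4.) -/

import Mathlib

/-- High-productivity stationary consumption denominator:
Dh(b,r) = w·zh + (1−β)·(1+r)·b·(1−zh) with w = (ε−1)/ε. -/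
noncomputable def Dh (β ε zh : ℝ) (b r : ℝ) : ℝ :=
  ((ε - 1) / ε) * zh + (1 - β) * (1 + r) * b * (1 - zh)

/-- Low-productivity stationary consumption denominator:
Dl(b,r) = w·zl + (1−β)·(1+r)·b·(1−zl) with w = (ε−1)/ε. -/
noncomputable def Dl (β ε zl : ℝ) (b r : ℝ) : ℝ :=
  ((ε - 1) / ε) * zl + (1 - β) * (1 + r) * b * (1 - zl)

/-- Natural-rate equation residual:
F(b,r) = β·ρ·(1+r)/Dh(b,r) + β·(1−ρ)·(1+r)/Dl(b,r) − ε/(ε−1). -/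
noncomputable def F (β ε ρ zh zl : ℝ) (b r : ℝ) : ℝ :=
  β * ρ * (1 + r) / Dh β ε zh b r
    + β * (1 - ρ) * (1 + r) / Dl β ε zl b r
    - ε / (ε - 1)

/-- Period-0 equilibrium residual under the Taylor rule:
G(b,π) = β·ρ·(1+r*+θ(π−1))/Dh(b,r*+θ(π−1)) + β·(1−ρ)·(1+r*+θ(π−1))/Dl(b,r*+θ(π−1))
        − ε/(ε−1+φ(π−1)π). -/
noncomputable def G (β ε ρ zh zl θ φ rstar : ℝ) (b π : ℝ) : ℝ :=
  β * ρ * (1 + rstar + θ * (π - 1)) / Dh β ε zh b (rstar + θ * (π - 1))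
    + β * (1 - ρ) * (1 + rstar + θ * (π - 1)) / Dl β ε zl b (rstar + θ * (π - 1))
    - ε / (ε - 1 + φ * (π - 1) * π)

/-- Sign of ∂Fᵖⁱ/∂π₀ in the proof of Proposition 4: the period-0 equilibrium
residual π ↦ G(b̄, π) has, at π = 1, the explicit derivative
βρθw·zh/Dh(b̄,r*)² + β(1−ρ)θw·zl/Dl(b̄,r*)² + εφ/(ε−1)², which is strictly
positive. -/
theorem stmt_17 (β ε ρ zh zl θ φ rstar : ℝ)
    (hβ0 : 0 < β) (hβ1 : β < 1) (hε : 1 < ε)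
    (hρ0 : 0 < ρ) (hρ1 : ρ < 1)
    (hzl0 : 0 < zl) (hzl1 : zl < 1) (hzh : 1 < zh)
    (hmean : ρ * zh + (1 - ρ) * zl = 1)
    (hθ : 0 < θ) (hφ : 0 < φ) (hr : rstar > -1)
    (bbar : ℝ) (hb : 0 ≤ bbar)
    (hDh : Dh β ε zh bbar rstar > 0) (hDl : Dl β ε zl bbar rstar > 0) :
    HasDerivAt (fun π => G β ε ρ zh zl θ φ rstar bbar π)
      (β * ρ * θ * ((ε - 1) / ε) * zh / (Dh β ε zh bbar rstar) ^ 2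
        + β * (1 - ρ) * θ * ((ε - 1) / ε) * zl / (Dl β ε zl bbar rstar) ^ 2
        + ε * φ / (ε - 1) ^ 2) 1 ∧
    0 < β * ρ * θ * ((ε - 1) / ε) * zh / (Dh β ε zh bbar rstar) ^ 2
        + β * (1 - ρ) * θ * ((ε - 1) / ε) * zl / (Dl β ε zl bbar rstar) ^ 2
        + ε * φ / (ε - 1) ^ 2 := by
  have hε0 : (0:ℝ) < ε := by linarith
  have hε1 : (0:ℝ) < ε - 1 := by linarith
  have hεne : ε - 1 ≠ 0 := ne_of_gt hε1
  have hDhne : Dh β ε zh bbar rstar ≠ 0 := ne_of_gt hDh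
  have hDlne : Dl β ε zl bbar rstar ≠ 0 := ne_of_gt hDl
  have hA : ((ε - 1) / ε) * zh + (1 - β) * (1 + rstar) * bbar * (1 - zh) ≠ 0 := by
    simpa [Dh] using hDhne
  have hB : ((ε - 1) / ε) * zl + (1 - β) * (1 + rstar) * bbar * (1 - zl) ≠ 0 := by
    simpa [Dl] using hDlne
  have hw : (0:ℝ) < (ε - 1) / ε := div_pos hε1 hε0
  have hzh0 : (0:ℝ) < zh := by linarith
  have hpos : 0 < β * ρ * θ * ((ε - 1) / ε) * zh / (Dh β ε zh bbar rstar) ^ 2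
        + β * (1 - ρ) * θ * ((ε - 1) / ε) * zl / (Dl β ε zl bbar rstar) ^ 2
        + ε * φ / (ε - 1) ^ 2 := by
    have h1 := div_pos (mul_pos (mul_pos (mul_pos (mul_pos hβ0 hρ0) hθ) hw) hzh0)
      (pow_pos hDh 2)
    have h2 := div_pos (mul_pos (mul_pos (mul_pos (mul_pos hβ0
      (by linarith : (0:ℝ) < 1 - ρ)) hθ) hw) hzl0) (pow_pos hDl 2)
    have h3 := div_pos (mul_pos hε0 hφ) (pow_pos hε1 2)
    linarith
  refine ⟨?_, hpos⟩
  have hu : HasDerivAt (fun π : ℝ => 1 + rstar + θ * (π - 1)) θ 1 := by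
    simpa using ((((hasDerivAt_id (1:ℝ)).sub_const 1).const_mul θ).const_add (1 + rstar))
  have hv : HasDerivAt (fun π : ℝ => 1 + (rstar + θ * (π - 1))) θ 1 := by
    simpa using (((((hasDerivAt_id (1:ℝ)).sub_const 1).const_mul θ).const_add rstar).const_add 1)
  have hdh : HasDerivAt
      (fun π : ℝ => ((ε - 1) / ε) * zh + (1 - β) * (1 + (rstar + θ * (π - 1))) * bbar * (1 - zh))
      ((1 - β) * θ * bbar * (1 - zh)) 1 := by
    simpa using ((((hv.const_mul (1 - β)).mul_const bbar).mul_const (1 - zh)).const_add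
      (((ε - 1) / ε) * zh))
  have hdl : HasDerivAt
      (fun π : ℝ => ((ε - 1) / ε) * zl + (1 - β) * (1 + (rstar + θ * (π - 1))) * bbar * (1 - zl))
      ((1 - β) * θ * bbar * (1 - zl)) 1 := by
    simpa using ((((hv.const_mul (1 - β)).mul_const bbar).mul_const (1 - zl)).const_add
      (((ε - 1) / ε) * zl))
  have hq : HasDerivAt (fun π : ℝ => ε - 1 + φ * (π - 1) * π) φ 1 := by
    have := ((((hasDerivAt_id (1:ℝ)).sub_const 1).const_mul φ).mul (hasDerivAt_id (1:ℝ))).const_add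
      (ε - 1)
    simpa using this
  have hAne : ((ε - 1) / ε) * zh + (1 - β) * (1 + (rstar + θ * ((1:ℝ) - 1))) * bbar * (1 - zh) ≠ 0 := by
    simpa using hA
  have hBne : ((ε - 1) / ε) * zl + (1 - β) * (1 + (rstar + θ * ((1:ℝ) - 1))) * bbar * (1 - zl) ≠ 0 := by
    simpa using hB
  have hQne : ε - 1 + φ * ((1:ℝ) - 1) * 1 ≠ 0 := by simpa using hεne
  have h1 := (hu.const_mul (β * ρ)).div hdh hAne
  have h2 := (hu.const_mul (β * (1 - ρ))).div hdl hBne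
  have h3 := (hasDerivAt_const (1:ℝ) ε).div hq hQne
  have hG := (h1.add h2).sub h3
  simp only [G, Dh, Dl]
  refine hG.congr_deriv ?_
  have e1 : (1:ℝ) - 1 = 0 := by norm_num
  simp only [e1, mul_zero, add_zero, zero_mul, mul_one, zero_sub] at *
  ring
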